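/- Let X be a compact geodesic metric space, A ⊆ X nonempty and closed, and t_A := sInf {t : ℝ | 0 ≤ t ∧ Metric.cthickening t A = Set.univ}. Then for all s, t with 0 ≤ t ≤ s ≤ t_A, Metric.hausdorffDist (Metric.cthickening t A) (Metric.cthickening s A) = s - t. (Thus the trajectory t ↦ cthickening t A, 0 ≤ t ≤ t_A, is a geodesic path in the hyperspace from A to the whole space X.) -/

import Mathlib

/-- A metric space is geodesic if any two points are joined by a geodesic path. -/
def IsGeodesicMetricSpace (X : Type*) [MetricSpace X] : Prop :=
  ∀ x y : X, ∃ γ : ℝ → X, γ 0 = x ∧ γ (dist x y) = y ∧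
    ∀ s ∈ Set.Icc (0 : ℝ) (dist x y), ∀ t ∈ Set.Icc (0 : ℝ) (dist x y),
      dist (γ s) (γ t) = |s - t|

private lemma mem_cthick_iff' {X : Type*} [MetricSpace X] {A : Set X} (hA : A.Nonempty)
    {δ : ℝ} (hδ : 0 ≤ δ) {x : X} :
    x ∈ Metric.cthickening δ A ↔ Metric.infDist x A ≤ δ := by
  rw [Metric.mem_cthickening_iff, Metric.infDist,
    ← ENNReal.le_ofReal_iff_toReal_le (Metric.infEdist_ne_top hA) hδ]

theorem trajectory_is_geodesic_in_hyperspace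
    {X : Type*} [MetricSpace X] [CompactSpace X]
    (hgeo : IsGeodesicMetricSpace X)
    (A : Set X) (hA : A.Nonempty) (hAclosed : IsClosed A)
    (tA : ℝ) (htA : tA = sInf {t : ℝ | 0 ≤ t ∧ Metric.cthickening t A = Set.univ}) :
    ∀ s t : ℝ, 0 ≤ t → t ≤ s → s ≤ tA →
      Metric.hausdorffDist (Metric.cthickening t A) (Metric.cthickening s A) = s - t := by
  intro s t ht hts hstA
  have hAc : IsCompact A := hAclosed.isCompact
  have hs0 : (0 : ℝ) ≤ s := ht.trans hts
  have hBt_ne : (Metric.cthickening t A).Nonempty := hA.mono (Metric.self_subset_cthickening A)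
  have hBs_ne : (Metric.cthickening s A).Nonempty := hA.mono (Metric.self_subset_cthickening A)
  have hbdd : ∀ r : ℝ, Bornology.IsBounded (Metric.cthickening r A) := fun r =>
    (isCompact_univ.isBounded).subset (Set.subset_univ _)
  have hfin : EMetric.hausdorffEdist (Metric.cthickening t A) (Metric.cthickening s A) ≠ ⊤ :=
    Metric.hausdorffEdist_ne_top_of_nonempty_of_bounded hBt_ne hBs_ne (hbdd t) (hbdd s)
  -- Upper bound
  have hub : Metric.hausdorffDist (Metric.cthickening t A) (Metric.cthickening s A) ≤ s - t := by
    apply Metric.hausdorffDist_le_of_infDist (by linarith)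
    · intro x hx
      have : x ∈ Metric.cthickening s A := Metric.cthickening_mono hts A hx
      simpa [Metric.infDist_zero_of_mem this] using sub_nonneg.2 hts
    · intro x hx
      have hxA : Metric.infDist x A ≤ s := (mem_cthick_iff' hA hs0).1 hx
      obtain ⟨a, haA, hax⟩ := hAc.exists_infDist_eq_dist hA x
      obtain ⟨γ, hγ0, hγ1, hγ⟩ := hgeo a x
      have hd : dist a x = Metric.infDist x A := by rw [dist_comm]; exact hax.symm
      by_cases hcase : Metric.infDist x A ≤ t
      · have : x ∈ Metric.cthickening t A := (mem_cthick_iff' hA ht).2 hcase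
        simpa [Metric.infDist_zero_of_mem this] using sub_nonneg.2 hts
      · push_neg at hcase
        have htd : t ≤ dist a x := hd ▸ hcase.le
        have hd0 : (0 : ℝ) ≤ dist a x := dist_nonneg
        have hy : dist (γ t) (γ 0) = t := by
          rw [hγ t ⟨ht, htd⟩ 0 ⟨le_refl 0, hd0⟩]; simp [abs_of_nonneg ht]
        have hymem : γ t ∈ Metric.cthickening t A := by
          refine (mem_cthick_iff' hA ht).2 ?_
          calc Metric.infDist (γ t) A ≤ dist (γ t) a := Metric.infDist_le_dist_of_mem haA
          _ = t := by rw [← hγ0] at *; exact hy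
        have hxy : dist x (γ t) = dist a x - t := by
          have := hγ (dist a x) ⟨hd0, le_refl _⟩ t ⟨ht, htd⟩
          rw [hγ1] at this
          rw [this, abs_of_nonneg (by linarith)]
        calc Metric.infDist x (Metric.cthickening t A) ≤ dist x (γ t) :=
              Metric.infDist_le_dist_of_mem hymem
          _ = dist a x - t := hxy
          _ ≤ s - t := by rw [hd]; linarith
  -- Lower bound
  have hlb : s - t ≤ Metric.hausdorffDist (Metric.cthickening t A) (Metric.cthickening s A) := by
    rcases eq_or_lt_of_le hts with rfl | hts'
    · simpa using Metric.hausdorffDist_nonneg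
    refine le_of_forall_pos_le_add fun ε hε => ?_
    rcases le_or_gt (s - t) ε with h | h
    · linarith [Metric.hausdorffDist_nonneg
        (s := Metric.cthickening t A) (t := Metric.cthickening s A)]
    set u := s - ε with hu
    have hut : t < u := by linarith
    have hu0 : 0 ≤ u := le_of_lt (ht.trans_lt hut)
    have hutA : u < tA := by
      rw [htA] at hstA ⊢; linarith
    -- cthickening u A ≠ univ
    have hne : Metric.cthickening u A ≠ Set.univ := by
      intro hcon
      have hmem : u ∈ {t : ℝ | 0 ≤ t ∧ Metric.cthickening t A = Set.univ} := ⟨hu0, hcon⟩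
      have : tA ≤ u := htA ▸ csInf_le ⟨0, fun r hr => hr.1⟩ hmem
      linarith
    obtain ⟨x, hx⟩ : ∃ x, x ∉ Metric.cthickening u A := by
      by_contra hcon
      push_neg at hcon
      exact hne (Set.eq_univ_of_forall hcon)
    have hxu : u < Metric.infDist x A := by
      by_contra hcon
      push_neg at hcon
      exact hx ((mem_cthick_iff' hA hu0).2 hcon)
    obtain ⟨a, haA, hax⟩ := hAc.exists_infDist_eq_dist hA x
    obtain ⟨γ, hγ0, hγ1, hγ⟩ := hgeo a x
    have hd : dist a x = Metric.infDist x A := by rw [dist_comm]; exact hax.symm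
    have hud : u ≤ dist a x := by rw [hd]; exact hxu.le
    have hd0 : (0 : ℝ) ≤ dist a x := dist_nonneg
    set y := γ u with hy
    have hya : dist y a = u := by
      have := hγ u ⟨hu0, hud⟩ 0 ⟨le_refl 0, hd0⟩
      rw [hγ0] at this
      rw [this, sub_zero, abs_of_nonneg hu0]
    have hyx : dist y x = dist a x - u := by
      have := hγ u ⟨hu0, hud⟩ (dist a x) ⟨hd0, le_refl _⟩
      rw [hγ1] at this
      rw [this, abs_of_nonpos (by linarith)]; ring
    have hyA_le : Metric.infDist y A ≤ u := hya ▸ Metric.infDist_le_dist_of_mem haA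
    have hyA_ge : u ≤ Metric.infDist y A := by
      have h1 : Metric.infDist x A ≤ Metric.infDist y A + dist y x := by
        rw [dist_comm]; exact Metric.infDist_le_infDist_add_dist
      rw [hyx, ← hd] at h1; linarith
    have hymem : y ∈ Metric.cthickening s A := (mem_cthick_iff' hA hs0).2 (by linarith)
    have hkey : u - t ≤ Metric.infDist y (Metric.cthickening t A) := by
      obtain ⟨z, hz, hzd⟩ := (Metric.isCompact_of_isClosed_isBounded
        (Metric.isClosed_cthickening) (hbdd t)).exists_infDist_eq_dist hBt_ne y
      rw [hzd]
      have hzA : Metric.infDist z A ≤ t := (mem_cthick_iff' hA ht).1 hz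
      have : Metric.infDist y A ≤ Metric.infDist z A + dist y z :=
        Metric.infDist_le_infDist_add_dist
      linarith
    have hfin' : EMetric.hausdorffEdist (Metric.cthickening s A)
        (Metric.cthickening t A) ≠ ⊤ := by
      rwa [EMetric.hausdorffEdist, EMetric.hausdorffEdist_comm]
    have := Metric.infDist_le_hausdorffDist_of_mem hymem hfin'
    rw [Metric.hausdorffDist_comm] at this
    linarith
  linarith
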